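/- Let Φ₀, Φ₁ be random elements of a measurable space X, let g : X → 𝕊 be measurable with S = g(Φ₀) and S⁺ = g(Φ₁), and let U be a {0,1}-valued random variable independent of (Φ₀, Φ₁) with p₁ = P(U = 1). Let ψ⁽⁰⁾ : 𝕊 → ℝ^{d₀}, ψ⁽¹⁾ : 𝕊 → ℝ^{d₁} be measurable with ψ⁽ⁱ⁾(S), ψ⁽ⁱ⁾(S⁺) square-integrable, let c∘, c• : X → ℝ with c∘(Φ₀), c•(Φ₀) square-integrable, set c(x,u) = (1−u)c∘(x) + u c•(x), and fix γ ∈ (0,1]. Write ψ(s,u) = [(1−u)ψ⁽⁰⁾(s) ; u ψ⁽¹⁾(s)] and, for θ = [θ⁰ ; θ¹] ∈ ℝ^{d₀+d₁}, define the mean-flow vector field f̄(θ) = E[ ψ(S,U) ( −θᵀψ(S,U) + c(Φ₀,U) + γ(1−U) min{ (θ⁰)ᵀψ⁽⁰⁾(S⁺), (θ¹)ᵀψ⁽¹⁾(S⁺) } ) ]. Then the block of f̄(θ) consisting of its last d₁ coordinates equals p₁ ( −R₍₁₎ θ¹ + E[ψ⁽¹⁾(S) c•(Φ₀)] ), where R₍₁₎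 = E[ψ⁽¹⁾(S) ψ⁽¹⁾(S)ᵀ]; in particular this block is affine in θ¹ and does not depend on θ⁰ or on γ. -/

import Mathlib

open MeasureTheory ProbabilityTheory

/-- For a separable feature map, the last-`d₁`-coordinates block of the
Q-learning mean-flow vector field is affine in `θ¹` and does not depend on `θ⁰` or `γ`:
it equals `p₁ (−R₍₁₎ θ¹ + E[ψ⁽¹⁾(S) c•(Φ₀)])`. -/
theorem stmt_1
    {Ω X 𝕊 : Type*} [MeasurableSpace Ω] [MeasurableSpace X] [MeasurableSpace 𝕊]
    (P : Measure Ω) [IsProbabilityMeasure P]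
    {d₀ d₁ : ℕ}
    (Φ0 Φ1 : Ω → X) (g : X → 𝕊) (U : Ω → ℝ)
    (hΦ0 : Measurable Φ0) (hΦ1 : Measurable Φ1) (hg : Measurable g) (hU : Measurable U)
    (hU01 : ∀ ω, U ω = 0 ∨ U ω = 1)
    (hindep : IndepFun (fun ω => (Φ0 ω, Φ1 ω)) U P)
    (ψ0 : 𝕊 → Fin d₀ → ℝ) (ψ1 : 𝕊 → Fin d₁ → ℝ)
    (hψ0 : Measurable ψ0) (hψ1 : Measurable ψ1)
    (hint00 : Integrable (fun ω => ‖ψ0 (g (Φ0 ω))‖ ^ 2) P)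
    (hint10 : Integrable (fun ω => ‖ψ1 (g (Φ0 ω))‖ ^ 2) P)
    (hint01 : Integrable (fun ω => ‖ψ0 (g (Φ1 ω))‖ ^ 2) P)
    (hint11 : Integrable (fun ω => ‖ψ1 (g (Φ1 ω))‖ ^ 2) P)
    (ccirc cbull : X → ℝ) (hccirc : Measurable ccirc) (hcbull : Measurable cbull)
    (hc2 : Integrable (fun ω => (ccirc (Φ0 ω)) ^ 2) P)
    (hc2' : Integrable (fun ω => (cbull (Φ0 ω)) ^ 2) P)
    (c : X → ℝ → ℝ)
    (hc : ∀ x u, c x u = (1 - u) * ccirc x + u * cbull x)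
    (γ : ℝ) (hγ : 0 < γ) (hγ1 : γ ≤ 1)
    (ψ : 𝕊 → ℝ → (Fin d₀ ⊕ Fin d₁) → ℝ)
    (hψ : ∀ s u, ψ s u = Sum.elim (fun i => (1 - u) * ψ0 s i) (fun j => u * ψ1 s j))
    (p1 : ℝ) (hp1 : p1 = (P {ω | U ω = 1}).toReal)
    (R1 : Matrix (Fin d₁) (Fin d₁) ℝ)
    (hR1 : ∀ i j, R1 i j = ∫ ω, ψ1 (g (Φ0 ω)) i * ψ1 (g (Φ0 ω)) j ∂P)
    (fbar : (Fin d₀ → ℝ) → (Fin d₁ → ℝ) → (Fin d₀ ⊕ Fin d₁) → ℝ)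
    (hfbar : ∀ θ0 θ1 a, fbar θ0 θ1 a =
      ∫ ω, ψ (g (Φ0 ω)) (U ω) a *
        (-(∑ b, Sum.elim θ0 θ1 b * ψ (g (Φ0 ω)) (U ω) b) + c (Φ0 ω) (U ω)
          + γ * (1 - U ω) *
            min (∑ i, θ0 i * ψ0 (g (Φ1 ω)) i) (∑ j, θ1 j * ψ1 (g (Φ1 ω)) j)) ∂P) :
    ∀ (θ0 : Fin d₀ → ℝ) (θ1 : Fin d₁ → ℝ) (j : Fin d₁),
      fbar θ0 θ1 (Sum.inr j) =
        p1 * (-(∑ k, R1 j k * θ1 k) + ∫ ω, ψ1 (g (Φ0 ω)) j * cbull (Φ0 ω) ∂P) := by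

  intro θ0 θ1 j
  set h : X → ℝ := fun x =>
    ψ1 (g x) j * (-(∑ k, θ1 k * ψ1 (g x) k) + cbull x) with hhdef
  have hmeas_ψ1j : ∀ k : Fin d₁, Measurable fun x => ψ1 (g x) k := fun k =>
    (measurable_pi_apply k).comp (hψ1.comp hg)
  have hmeas_h : Measurable h := by
    apply ((hmeas_ψ1j j).mul _)
    exact ((Finset.measurable_sum _ fun k _ => (hmeas_ψ1j k).const_mul _).neg).add hcbull
  -- pointwise identity
  have key : ∀ ω, ψ (g (Φ0 ω)) (U ω) (Sum.inr j) *
        (-(∑ b, Sum.elim θ0 θ1 b * ψ (g (Φ0 ω)) (U ω) b) + c (Φ0 ω) (U ω)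
          + γ * (1 - U ω) *
            min (∑ i, θ0 i * ψ0 (g (Φ1 ω)) i) (∑ k, θ1 k * ψ1 (g (Φ1 ω)) k))
      = U ω * h (Φ0 ω) := by
    intro ω
    rcases hU01 ω with h0 | h1
    · simp [hψ, h0]
    · simp only [hψ, hc, h1, hhdef, Fintype.sum_sum_type, Sum.elim_inl, Sum.elim_inr,
        sub_self, zero_mul, mul_zero, Finset.sum_const_zero, zero_add, one_mul]
      ring
  -- independence
  have hindepUH : IndepFun U (fun ω => h (Φ0 ω)) P := by
    have := (hindep.symm).comp measurable_id (hmeas_h.comp measurable_fst)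
    exact this
  -- integrability facts
  have hA : ∀ k : Fin d₁, Integrable (fun ω => ψ1 (g (Φ0 ω)) j * ψ1 (g (Φ0 ω)) k) P := by
    intro k
    refine hint10.mono' (((hmeas_ψ1j j).comp hΦ0).mul ((hmeas_ψ1j k).comp hΦ0)).aestronglyMeasurable
      (Filter.Eventually.of_forall fun ω => ?_)
    have h1 : |ψ1 (g (Φ0 ω)) j| ≤ ‖ψ1 (g (Φ0 ω))‖ := by
      simpa using norm_le_pi_norm (ψ1 (g (Φ0 ω))) j
    have h2 : |ψ1 (g (Φ0 ω)) k| ≤ ‖ψ1 (g (Φ0 ω))‖ := by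
      simpa using norm_le_pi_norm (ψ1 (g (Φ0 ω))) k
    have hn : (0:ℝ) ≤ ‖ψ1 (g (Φ0 ω))‖ := norm_nonneg _
    rw [Real.norm_eq_abs, abs_mul]
    calc |ψ1 (g (Φ0 ω)) j| * |ψ1 (g (Φ0 ω)) k| ≤ ‖ψ1 (g (Φ0 ω))‖ * ‖ψ1 (g (Φ0 ω))‖ :=
          mul_le_mul h1 h2 (abs_nonneg _) hn
      _ = ‖ψ1 (g (Φ0 ω))‖ ^ 2 := (sq _).symm
  have hB : Integrable (fun ω => ψ1 (g (Φ0 ω)) j * cbull (Φ0 ω)) P := by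
    refine (hint10.add hc2').mono'
      (((hmeas_ψ1j j).comp hΦ0).mul (hcbull.comp hΦ0)).aestronglyMeasurable
      (Filter.Eventually.of_forall fun ω => ?_)
    have h1 : |ψ1 (g (Φ0 ω)) j| ≤ ‖ψ1 (g (Φ0 ω))‖ := by
      simpa using norm_le_pi_norm (ψ1 (g (Φ0 ω))) j
    simp only [Pi.add_apply]
    rw [Real.norm_eq_abs, abs_mul]
    nlinarith [abs_nonneg (ψ1 (g (Φ0 ω)) j), abs_nonneg (cbull (Φ0 ω)),
      sq_abs (cbull (Φ0 ω)), sq_nonneg (|ψ1 (g (Φ0 ω)) j| - |cbull (Φ0 ω)|),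
      norm_nonneg (ψ1 (g (Φ0 ω)))]
  -- integral of U
  have hUset : MeasurableSet {ω | U ω = 1} := hU (measurableSet_singleton 1)
  have hUind : U = Set.indicator {ω | U ω = 1} (fun _ => (1:ℝ)) := by
    funext ω
    rcases hU01 ω with h0 | h1
    · rw [Set.indicator_of_notMem (by simp [Set.mem_setOf_eq, h0])]
      exact h0
    · rw [Set.indicator_of_mem (by simp [Set.mem_setOf_eq, h1])]
      exact h1
  have hUint : ∫ ω, U ω ∂P = p1 := by
    rw [hp1]
    conv_lhs => rw [hUind]
    rw [integral_indicator_const (1:ℝ) hUset]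
    simp
    rfl
  -- integral of h ∘ Φ0
  have heq : ∀ ω, h (Φ0 ω) =
      -(∑ k, θ1 k * (ψ1 (g (Φ0 ω)) j * ψ1 (g (Φ0 ω)) k)) + ψ1 (g (Φ0 ω)) j * cbull (Φ0 ω) := by
    intro ω
    have hms : ψ1 (g (Φ0 ω)) j * (∑ k, θ1 k * ψ1 (g (Φ0 ω)) k)
        = ∑ k, θ1 k * (ψ1 (g (Φ0 ω)) j * ψ1 (g (Φ0 ω)) k) := by
      rw [Finset.mul_sum]
      exact Finset.sum_congr rfl fun k _ => by ring
    simp only [hhdef]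
    rw [mul_add, mul_neg, hms]
  have hHint : ∫ ω, h (Φ0 ω) ∂P =
      -(∑ k, θ1 k * ∫ ω, ψ1 (g (Φ0 ω)) j * ψ1 (g (Φ0 ω)) k ∂P)
        + ∫ ω, ψ1 (g (Φ0 ω)) j * cbull (Φ0 ω) ∂P := by
    rw [integral_congr_ae (Filter.Eventually.of_forall heq)]
    have hneg : Integrable
        (fun ω => -∑ k, θ1 k * (ψ1 (g (Φ0 ω)) j * ψ1 (g (Φ0 ω)) k)) P :=
      (integrable_finset_sum _ fun k _ => (hA k).const_mul _).neg
    rw [integral_add hneg hB, integral_neg,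
      integral_finset_sum _ fun k _ => (hA k).const_mul _]
    congr 2
    exact Finset.sum_congr rfl fun k _ => integral_const_mul _ _
  -- put things together
  rw [hfbar]
  rw [integral_congr_ae (Filter.Eventually.of_forall key)]
  have := hindepUH.integral_fun_mul_eq_mul_integral hU.aestronglyMeasurable
    (hmeas_h.comp hΦ0).aestronglyMeasurable
  rw [this, hUint, hHint]
  have hfin : (∑ k, θ1 k * ∫ ω, ψ1 (g (Φ0 ω)) j * ψ1 (g (Φ0 ω)) k ∂P)
      = ∑ k, R1 j k * θ1 k :=
    Finset.sum_congr rfl fun k _ => by rw [hR1]; ring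
  rw [hfin]
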